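/- Hyperplane (matrix) representation of the Dirichlet matroid: let u: B → ℝ be injective. For each edge e of Γ define a vector v_e ∈ ℝ^{V∖B} × ℝ by: v_e = χ_i − χ_j if e = ij with i,j ∈ V∖B, and v_e = χ_i − u(j)·δ if e = ij with i ∈ V∖B and j ∈ B, where χ_i denotes the standard basis vector indexed by i ∈ V∖B and δ = (0,1) spans the extra coordinate; also set v_ê = δ. Then for every X ⊆ Ē = E ∪ {ê}, the family (v_e)_{e∈X} is linearly independent over ℝ if and only if X ⊆ F for some F ∈ Σ₁ or X ⊆ F ∪ {ê} for some F ∈ Σ₀; equivalently, (v_e)_{e∈X} is linearly dependent if and only if X contains the edge set of a cycle of Γ, or X contains two distinct crossings of N, or X contains ê together with a crossing of N. -/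

import Mathlib

open scoped BigOperators Classical

noncomputable section

namespace DirichletPaper

variable {V : Type*} [Fintype V] [DecidableEq V]

/-- `(Γ, B)` is a network: `Γ` is a connected finite simple graph, there are at
least two boundary nodes, and no edge of `Γ` joins two boundary nodes. -/
structure IsNetwork (Γ : SimpleGraph V) (B : Finset V) : Prop where
  connected : Γ.Connected
  two_le_card : 2 ≤ B.card
  boundary_independent : ∀ i ∈ B, ∀ j ∈ B, ¬ Γ.Adj i j

/-- A crossing of the network `(Γ, B)`: the edge set of a simple path in `Γ`
whose two endpoints are distinct boundary nodes and all of whose internal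
vertices are interior (i.e. lie in `V ∖ B`). -/
def IsCrossing (Γ : SimpleGraph V) (B : Finset V) (X : Finset (Sym2 V)) : Prop :=
  ∃ (i j : V) (p : Γ.Walk i j), p.IsPath ∧ i ∈ B ∧ j ∈ B ∧ i ≠ j ∧
    (∀ v ∈ p.support, v ≠ i → v ≠ j → v ∉ B) ∧ X = p.edges.toFinset

/-- A grove of the network `(Γ, B)`: an acyclic edge set `F ⊆ E` such that every
interior vertex is incident to an edge of `F` and every connected component of
the forest `F` contains a boundary node. -/
def IsGrove (Γ : SimpleGraph V) (B : Finset V) (F : Finset (Sym2 V)) : Prop :=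
  (F : Set (Sym2 V)) ⊆ Γ.edgeSet ∧
  (SimpleGraph.fromEdgeSet (F : Set (Sym2 V))).IsAcyclic ∧
  (∀ v : V, v ∉ B → ∃ e ∈ F, v ∈ e) ∧
  (∀ v : V, ∃ b ∈ B, (SimpleGraph.fromEdgeSet (F : Set (Sym2 V))).Reachable v b)

/-- `Σ₁`: groves containing exactly one crossing. -/
def Sigma1 (Γ : SimpleGraph V) (B : Finset V) (F : Finset (Sym2 V)) : Prop :=
  IsGrove Γ B F ∧ ∃! C : Finset (Sym2 V), IsCrossing Γ B C ∧ C ⊆ F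

/-- `Σ₀`: groves containing no crossing. -/
def Sigma0 (Γ : SimpleGraph V) (B : Finset V) (F : Finset (Sym2 V)) : Prop :=
  IsGrove Γ B F ∧ ∀ C : Finset (Sym2 V), IsCrossing Γ B C → ¬ C ⊆ F

/-- The generating function `∑_{F ∈ S} ∏_{e ∈ F} x_e`. -/
def groveSum (R : Type*) [CommRing R] (S : Finset (Sym2 V) → Prop) (x : Sym2 V → R) : R :=
  ∑ F ∈ Finset.univ.filter S, ∏ e ∈ F, x e

/-- `P₀(x) = ∑_{F ∈ Σ₀} ∏_{e ∈ F} x_e`. -/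
def P0 (R : Type*) [CommRing R] (Γ : SimpleGraph V) (B : Finset V) (x : Sym2 V → R) : R :=
  groveSum R (Sigma0 Γ B) x

/-- `P₁(x) = ∑_{F ∈ Σ₁} ∏_{e ∈ F} x_e`. -/
def P1 (R : Type*) [CommRing R] (Γ : SimpleGraph V) (B : Finset V) (x : Sym2 V → R) : R :=
  groveSum R (Sigma1 Γ B) x

/-- The ground set `Ē = E ∪ {ê}` of the Dirichlet matroid, realized inside
`Option (Sym2 V)`, with `ê = none` and an edge `e` realized as `some e`. -/
def ground (Γ : SimpleGraph V) : Finset (Option (Sym2 V)) :=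
  insert none ((Finset.univ.filter (· ∈ Γ.edgeSet)).image some)

/-- Independent sets of the Dirichlet matroid `M(N)`: subsets of `F` for some
`F ∈ Σ₁`, or subsets of `F ∪ {ê}` for some `F ∈ Σ₀`. -/
def Indep (Γ : SimpleGraph V) (B : Finset V) (X : Finset (Option (Sym2 V))) : Prop :=
  (∃ F, Sigma1 Γ B F ∧ X ⊆ F.image some) ∨
  (∃ F, Sigma0 Γ B F ∧ X ⊆ insert none (F.image some))

/-- Bases of `M(N)`: maximal independent sets. -/
def IsBasis (Γ : SimpleGraph V) (B : Finset V) (X : Finset (Option (Sym2 V))) : Prop :=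
  Indep Γ B X ∧ ∀ Y, Indep Γ B Y → X ⊆ Y → Y = X

/-- Circuits of `M(N)`: minimal dependent subsets of the ground set. -/
def IsCircuit (Γ : SimpleGraph V) (B : Finset V) (X : Finset (Option (Sym2 V))) : Prop :=
  X ⊆ ground Γ ∧ ¬ Indep Γ B X ∧ ∀ Y ⊂ X, Indep Γ B Y

/-- The rank function of `M(N)`. -/
def rk (Γ : SimpleGraph V) (B : Finset V) (X : Finset (Option (Sym2 V))) : ℕ :=
  (X.powerset.filter (Indep Γ B)).sup Finset.card

/-- Independent sets of the graphic matroid of `G`: edge sets of forests. -/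
def IndepG (G : SimpleGraph V) (X : Finset (Sym2 V)) : Prop :=
  (X : Set (Sym2 V)) ⊆ G.edgeSet ∧ (SimpleGraph.fromEdgeSet (X : Set (Sym2 V))).IsAcyclic

/-- Circuits of the graphic matroid of `G`. -/
def IsCircuitG (G : SimpleGraph V) (X : Finset (Sym2 V)) : Prop :=
  (X : Set (Sym2 V)) ⊆ G.edgeSet ∧ ¬ IndepG G X ∧ ∀ Y ⊂ X, IndepG G Y

/-- The edge set of `G` as a `Finset`. -/
def edgeFinset' (G : SimpleGraph V) : Finset (Sym2 V) :=
  Finset.univ.filter (· ∈ G.edgeSet)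

/-- The rank function of the graphic matroid of `G`. -/
def rkG (G : SimpleGraph V) (X : Finset (Sym2 V)) : ℕ :=
  (X.powerset.filter (IndepG G)).sup Finset.card

/-- The characteristic polynomial `χ(λ) = ∑_{X ⊆ S} (-1)^{|X|} λ^{r(S) - r(X)}`
of a matroid with ground set `S` and rank function `r`. -/
def charPolyOf {α : Type*} [DecidableEq α] (S : Finset α) (r : Finset α → ℕ) : Polynomial ℤ :=
  ∑ X ∈ S.powerset, Polynomial.C ((-1 : ℤ) ^ X.card) * Polynomial.X ^ (r S - r X)

/-- The graph `Γ̂` obtained from `Γ` by adding an edge between each pair of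
distinct boundary nodes. -/
def hatGraph (Γ : SimpleGraph V) (B : Finset V) : SimpleGraph V where
  Adj i j := Γ.Adj i j ∨ (i ∈ B ∧ j ∈ B ∧ i ≠ j)
  symm := by
    constructor
    intro i j h
    rcases h with h | ⟨hi, hj, hne⟩
    · exact Or.inl h.symm
    · exact Or.inr ⟨hj, hi, hne.symm⟩
  loopless := by
    constructor
    intro i h
    rcases h with h | ⟨-, -, hne⟩
    · exact Γ.ne_of_adj h rfl
    · exact hne rfl

/-- The weighted Laplacian matrix of `Γ` with edge weights `x`. -/
def lap (Γ : SimpleGraph V) (x : Sym2 V → ℂ) : Matrix V V ℂ := fun i j =>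
  if i = j then ∑ k ∈ Finset.univ.filter (fun k => Γ.Adj i k), x s(i, k)
  else if Γ.Adj i j then -x s(i, j) else 0

/-- The boundary-boundary block `A` of the Laplacian. -/
def lapA (Γ : SimpleGraph V) (B : Finset V) (x : Sym2 V → ℂ) :
    Matrix {v : V // v ∈ B} {v : V // v ∈ B} ℂ :=
  (lap Γ x).submatrix Subtype.val Subtype.val

/-- The interior-interior block `D` of the Laplacian. -/
def lapD (Γ : SimpleGraph V) (B : Finset V) (x : Sym2 V → ℂ) :
    Matrix {v : V // v ∉ B} {v : V // v ∉ B} ℂ :=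
  (lap Γ x).submatrix Subtype.val Subtype.val

/-- The boundary-interior block `B₀` of the Laplacian. -/
def lapB (Γ : SimpleGraph V) (B : Finset V) (x : Sym2 V → ℂ) :
    Matrix {v : V // v ∈ B} {v : V // v ∉ B} ℂ :=
  (lap Γ x).submatrix Subtype.val Subtype.val

/-- The response matrix `Λ(x) = A - B₀ D⁻¹ B₀ᵀ` of the network. -/
def response (Γ : SimpleGraph V) (B : Finset V) (x : Sym2 V → ℂ) :
    Matrix {v : V // v ∈ B} {v : V // v ∈ B} ℂ :=
  lapA Γ B x - lapB Γ B x * (lapD Γ B x)⁻¹ * (lapB Γ B x).transpose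

/-- `P₀` as a real multivariate polynomial in the variables `x_e`. -/
def P0mv (Γ : SimpleGraph V) (B : Finset V) : MvPolynomial (Sym2 V) ℝ :=
  ∑ F ∈ Finset.univ.filter (Sigma0 Γ B), ∏ e ∈ F, MvPolynomial.X e

/-- `P₁` as a real multivariate polynomial in the variables `x_e`. -/
def P1mv (Γ : SimpleGraph V) (B : Finset V) : MvPolynomial (Sym2 V) ℝ :=
  ∑ F ∈ Finset.univ.filter (Sigma1 Γ B), ∏ e ∈ F, MvPolynomial.X e

/-- `E_{ef}(g, h) = ∂_e g · ∂_f h + ∂_f g · ∂_e h - g · ∂_e ∂_f h - ∂_e ∂_f g · h`. -/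
def Emix {σ : Type*} (e f : σ) (g h : MvPolynomial σ ℝ) : MvPolynomial σ ℝ :=
  MvPolynomial.pderiv e g * MvPolynomial.pderiv f h +
    MvPolynomial.pderiv f g * MvPolynomial.pderiv e h -
    g * MvPolynomial.pderiv e (MvPolynomial.pderiv f h) -
    MvPolynomial.pderiv e (MvPolynomial.pderiv f g) * h

/-- `Δ_{ef}(g) = ∂_e g · ∂_f g - g · ∂_e ∂_f g`, the Rayleigh difference. -/
def Delta {σ : Type*} (e f : σ) (g : MvPolynomial σ ℝ) : MvPolynomial σ ℝ :=
  MvPolynomial.pderiv e g * MvPolynomial.pderiv f g -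
    g * MvPolynomial.pderiv e (MvPolynomial.pderiv f g)

/-- The block of the network containing the vertex `i`: all `j ∈ V` reachable
from `i` by a path all of whose vertices except possibly the final one are
interior. -/
def blockOf (Γ : SimpleGraph V) (B : Finset V) (i : V) : Finset V :=
  Finset.univ.filter (fun j => ∃ p : Γ.Walk i j, p.IsPath ∧ ∀ v ∈ p.support, v ≠ j → v ∉ B)


/-! ### Auxiliary development -/

section Aux
set_option linter.unusedSectionVars false

open SimpleGraph Finset

variable {Γ : SimpleGraph V} {B : Finset V}

/-- Combinatorial dependence: `X` contains a cycle, two distinct crossings, or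
`ê` together with a crossing. -/
def Bad (Γ : SimpleGraph V) (B : Finset V) (X : Finset (Option (Sym2 V))) : Prop :=
  (∃ (a : V) (w : Γ.Walk a a), w.IsCycle ∧ ∀ e ∈ w.edges, some e ∈ X) ∨
  (∃ C₁ C₂ : Finset (Sym2 V), IsCrossing Γ B C₁ ∧ IsCrossing Γ B C₂ ∧ C₁ ≠ C₂ ∧
    (∀ e ∈ C₁, some e ∈ X) ∧ (∀ e ∈ C₂, some e ∈ X)) ∨
  (none ∈ X ∧ ∃ C, IsCrossing Γ B C ∧ ∀ e ∈ C, some e ∈ X)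

/-- The hypothesis on the vectors `v_e`, packaged. -/
def VE (Γ : SimpleGraph V) (B : Finset V) (u : V → ℝ)
    (v : Option (Sym2 V) → ({w : V // w ∉ B} → ℝ) × ℝ) : Prop :=
  ∀ i j : V, Γ.Adj i j →
    (∀ (hi : i ∉ B) (hj : j ∉ B),
      v (some s(i, j)) = (Pi.single ⟨i, hi⟩ 1 - Pi.single ⟨j, hj⟩ 1, 0) ∨
      v (some s(i, j)) = (Pi.single ⟨j, hj⟩ 1 - Pi.single ⟨i, hi⟩ 1, 0)) ∧
    (∀ (hi : i ∉ B), j ∈ B → v (some s(i, j)) = (Pi.single ⟨i, hi⟩ 1, -u j))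

/-- The auxiliary "potential" vector of a vertex. -/
def phi (B : Finset V) (u : V → ℝ) (w : V) : ({w : V // w ∉ B} → ℝ) × ℝ :=
  if h : w ∈ B then (0, u w) else (Pi.single ⟨w, h⟩ 1, 0)

variable {u : V → ℝ} {v : Option (Sym2 V) → ({w : V // w ∉ B} → ℝ) × ℝ}

lemma phi_fst (x w : V) (hw : w ∉ B) :
    (phi B u x).1 ⟨w, hw⟩ = if x = w then 1 else 0 := by
  by_cases hx : x ∈ B
  · rw [phi, dif_pos hx]
    have : x ≠ w := fun h => hw (h ▸ hx)
    simp [this]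
  · have h0 : (phi B u x).1 ⟨w, hw⟩ = (Pi.single (⟨x, hx⟩ : {w : V // w ∉ B}) (1:ℝ) : {w : V // w ∉ B} → ℝ) ⟨w, hw⟩ := by
      rw [phi, dif_neg hx]
    rw [h0, Pi.single_apply]
    by_cases hxw : x = w
    · subst hxw; simp
    · have : (⟨w, hw⟩ : {w : V // w ∉ B}) ≠ ⟨x, hx⟩ := by
        simp [Subtype.ext_iff]; exact fun h => hxw h.symm
      simp [if_neg this, hxw]; exact fun h => hxw h.symm

lemma phi_snd (x : V) : (phi B u x).2 = if x ∈ B then u x else 0 := by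
  by_cases hx : x ∈ B <;> simp [phi, hx]

lemma edgeVec (hN : IsNetwork Γ B) (hvE : VE Γ B u v) {i j : V} (h : Γ.Adj i j) :
    ∃ c : ℝ, (c = 1 ∨ c = -1) ∧ v (some s(i, j)) = c • (phi B u i - phi B u j) := by
  by_cases hi : i ∈ B
  · by_cases hj : j ∈ B
    · exact absurd h (hN.boundary_independent i hi j hj)
    · refine ⟨-1, Or.inr rfl, ?_⟩
      have := ((hvE j i h.symm).2) hj hi
      rw [Sym2.eq_swap] at this
      rw [this, phi, phi, dif_pos hi, dif_neg hj]
      rw [neg_smul, one_smul, neg_sub]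
      ext <;> simp
  · by_cases hj : j ∈ B
    · refine ⟨1, Or.inl rfl, ?_⟩
      have := ((hvE i j h).2) hi hj
      rw [this, phi, phi, dif_neg hi, dif_pos hj, one_smul]
      ext <;> simp
    · rcases ((hvE i j h).1) hi hj with h1 | h1
      · refine ⟨1, Or.inl rfl, ?_⟩
        rw [h1, phi, phi, dif_neg hi, dif_neg hj, one_smul]
        ext <;> simp
      · refine ⟨-1, Or.inr rfl, ?_⟩
        rw [h1, phi, phi, dif_neg hi, dif_neg hj, neg_smul, one_smul, neg_sub]
        ext <;> simp

lemma coord_eq_zero (hN : IsNetwork Γ B) (hvE : VE Γ B u v) {e : Sym2 V}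
    (he : e ∈ Γ.edgeSet) {w : V} (hw : w ∉ B) (hwe : w ∉ e) :
    (v (some e)).1 ⟨w, hw⟩ = 0 := by
  induction e with
  | _ i j =>
    rw [SimpleGraph.mem_edgeSet] at he
    obtain ⟨c, _, hc⟩ := edgeVec hN hvE he
    have hwi : i ≠ w := fun h => hwe (h ▸ Sym2.mem_mk_left i j)
    have hwj : j ≠ w := fun h => hwe (h ▸ Sym2.mem_mk_right i j)
    rw [hc]
    have : ((phi B u i - phi B u j).1) ⟨w, hw⟩ = 0 := by
      simp [Prod.fst_sub, phi_fst, hwi, hwj]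
    simp only [Prod.smul_fst, Pi.smul_apply, this, smul_zero]

lemma coord_ne_zero (hN : IsNetwork Γ B) (hvE : VE Γ B u v) {e : Sym2 V}
    (he : e ∈ Γ.edgeSet) {w : V} (hw : w ∉ B) (hwe : w ∈ e) :
    (v (some e)).1 ⟨w, hw⟩ ≠ 0 := by
  induction e with
  | _ i j =>
    rw [SimpleGraph.mem_edgeSet] at he
    obtain ⟨c, hc1, hc⟩ := edgeVec hN hvE he
    have hij : i ≠ j := he.ne
    have hcne : c ≠ 0 := by rcases hc1 with rfl | rfl <;> norm_num
    rw [hc]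
    have hval : ((phi B u i - phi B u j).1) ⟨w, hw⟩ =
        (if i = w then (1:ℝ) else 0) - (if j = w then 1 else 0) := by
      simp [Prod.fst_sub, phi_fst]
    rcases Sym2.mem_iff.mp hwe with rfl | rfl
    · simp only [Prod.smul_fst, Pi.smul_apply, hval, if_pos rfl, if_neg (Ne.symm hij)]
      simpa using hcne
    · simp only [Prod.smul_fst, Pi.smul_apply, hval, if_neg hij, if_pos rfl]
      simpa using hcne

lemma mem_ground_edge {X : Finset (Option (Sym2 V))} (hX : X ⊆ ground Γ)
    {e : Sym2 V} (he : some e ∈ X) : e ∈ Γ.edgeSet := by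
  have := hX he
  rw [ground, Finset.mem_insert] at this
  rcases this with h | h
  · exact absurd h (by simp)
  · obtain ⟨e', he', heq⟩ := Finset.mem_image.mp h
    obtain rfl : e' = e := by simpa using heq
    simpa using (Finset.mem_filter.mp he').2

lemma sum_fst {α : Type*} (s : Finset α) (f : α → ({w : V // w ∉ B} → ℝ) × ℝ) :
    (∑ a ∈ s, f a).1 = ∑ a ∈ s, (f a).1 := by
  classical
  induction s using Finset.induction with
  | empty => simp
  | insert _ _ h ih => rw [Finset.sum_insert h, Finset.sum_insert h, Prod.fst_add, ih]

lemma sum_snd {α : Type*} (s : Finset α) (f : α → ({w : V // w ∉ B} → ℝ) × ℝ) :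
    (∑ a ∈ s, f a).2 = ∑ a ∈ s, (f a).2 := by
  classical
  induction s using Finset.induction with
  | empty => simp
  | insert _ _ h ih => rw [Finset.sum_insert h, Finset.sum_insert h, Prod.snd_add, ih]

lemma sum_coord {α : Type*} (s : Finset α) (f : α → ({w : V // w ∉ B} → ℝ) × ℝ)
    {w : V} (hw : w ∉ B) :
    (∑ a ∈ s, f a).1 ⟨w, hw⟩ = ∑ a ∈ s, (f a).1 ⟨w, hw⟩ := by
  rw [sum_fst]; exact Finset.sum_apply _ _ _

lemma telescope (hN : IsNetwork Γ B) (hvE : VE Γ B u v) :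
    ∀ {a b : V} (p : Γ.Walk a b), p.edges.Nodup →
    ∃ g : Sym2 V → ℝ, (∀ e, g e ≠ 0 → e ∈ p.edges) ∧ (∀ e ∈ p.edges, g e ≠ 0) ∧
      ∑ e ∈ p.edges.toFinset, g e • v (some e) = phi B u a - phi B u b := by
  intro a b p
  induction p with
  | nil => exact fun _ => ⟨0, by simp, by simp, by simp⟩
  | @cons a c b h q ih =>
    intro hnd
    rw [SimpleGraph.Walk.edges_cons, List.nodup_cons] at hnd
    obtain ⟨g, hg1, hg2, hg3⟩ := ih hnd.2
    obtain ⟨c₀, hc₀, hv₀⟩ := edgeVec hN hvE h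
    have hc₀ne : c₀ ≠ 0 := by rcases hc₀ with rfl | rfl <;> norm_num
    have hnotmem : s(a, c) ∉ q.edges.toFinset := by simpa using hnd.1
    refine ⟨Function.update g s(a, c) c₀, ?_, ?_, ?_⟩
    · intro e hge
      by_cases he : e = s(a, c)
      · subst he; simp
      · rw [Function.update_of_ne he] at hge
        exact List.mem_cons_of_mem _ (hg1 e hge)
    · intro e he
      rw [SimpleGraph.Walk.edges_cons, List.mem_cons] at he
      rcases he with rfl | he'
      · rw [Function.update_self]; exact hc₀ne
      · have hne : e ≠ s(a, c) := fun hh => hnd.1 (hh ▸ he')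
        rw [Function.update_of_ne hne]; exact hg2 e he'
    · rw [SimpleGraph.Walk.edges_cons, List.toFinset_cons, Finset.sum_insert hnotmem,
        Function.update_self]
      have hrest : ∑ e ∈ q.edges.toFinset, Function.update g s(a, c) c₀ e • v (some e)
          = ∑ e ∈ q.edges.toFinset, g e • v (some e) := by
        refine Finset.sum_congr rfl fun e he => ?_
        have hne : e ≠ s(a, c) := fun hh => hnotmem (hh ▸ he)
        rw [Function.update_of_ne hne]
      rw [hrest, hg3, hv₀, smul_smul]
      have : c₀ * c₀ = 1 := by rcases hc₀ with rfl | rfl <;> norm_num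
      rw [this, one_smul]
      abel

lemma crossing_sum (hN : IsNetwork Γ B) (hu : Set.InjOn u (B : Set V))
    (hvE : VE Γ B u v) {C : Finset (Sym2 V)} (hC : IsCrossing Γ B C) :
    ∃ (g : Sym2 V → ℝ) (r : ℝ), r ≠ 0 ∧ (∀ e, g e ≠ 0 → e ∈ C) ∧ (∀ e ∈ C, g e ≠ 0) ∧
      C.Nonempty ∧ ∑ e ∈ C, g e • v (some e) = (0, r) := by
  obtain ⟨i, j, p, hp, hi, hj, hij, _, rfl⟩ := hC
  obtain ⟨g, hg1, hg2, hg3⟩ := telescope hN hvE p hp.isTrail.edges_nodup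
  have hr : phi B u i - phi B u j = (0, u i - u j) := by
    rw [phi, phi, dif_pos hi, dif_pos hj]
    ext x
    · simp
    · simp
  have hune : u i - u j ≠ 0 := sub_ne_zero.mpr (fun hh => hij (hu hi hj hh))
  have hne : p.edges ≠ [] := by
    cases p with
    | nil => exact absurd rfl hij
    | cons h q => simp
  obtain ⟨e₀, he₀⟩ := List.exists_mem_of_ne_nil _ hne
  refine ⟨g, u i - u j, hune, fun e hge => List.mem_toFinset.mpr (hg1 e hge),
    fun e he => hg2 e (List.mem_toFinset.mp he), ⟨e₀, List.mem_toFinset.mpr he₀⟩, ?_⟩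
  rw [hg3, hr]

lemma sum_option (g : Sym2 V → ℝ) (r : ℝ) (X : Finset (Option (Sym2 V)))
    (S : Finset (Sym2 V)) (hS : S.image some ⊆ X) (hr : r ≠ 0 → none ∈ X)
    (hsupp : ∀ e, g e ≠ 0 → e ∈ S) :
    ∑ a ∈ X, (Option.elim a r g) • v a = ∑ e ∈ S, g e • v (some e) + r • v none := by
  classical
  set T : Finset (Option (Sym2 V)) := insert none (S.image some) with hT
  have hsub : X ∩ T ⊆ X := Finset.inter_subset_left
  have hXT : ∑ a ∈ X, (Option.elim a r g) • v a = ∑ a ∈ X ∩ T, (Option.elim a r g) • v a := by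
    refine (Finset.sum_subset hsub fun a haX haT => ?_).symm
    have haT' : a ∉ T := fun hh => haT (Finset.mem_inter.mpr ⟨haX, hh⟩)
    cases a with
    | none => exact absurd (Finset.mem_insert_self _ _) haT'
    | some e =>
      have heS : e ∉ S := fun hh =>
        haT' (Finset.mem_insert_of_mem (Finset.mem_image_of_mem some hh))
      have : g e = 0 := by by_contra hgg; exact heS (hsupp e hgg)
      simp [this]
  by_cases hn : none ∈ X
  · have hTX : X ∩ T = T := by
      apply Finset.inter_eq_right.mpr
      intro a haT
      rcases Finset.mem_insert.mp haT with rfl | h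
      · exact hn
      · exact hS h
    rw [hXT, hTX, hT, Finset.sum_insert (by simp),
      Finset.sum_image (fun x _ y _ h => Option.some_injective _ h)]
    simp only [Option.elim]
    abel
  · have hr0 : r = 0 := by by_contra hrr; exact hn (hr hrr)
    have hTX : X ∩ T = S.image some := by
      ext a
      constructor
      · intro ha
        obtain ⟨haX, haT⟩ := Finset.mem_inter.mp ha
        rcases Finset.mem_insert.mp haT with rfl | h
        · exact absurd haX hn
        · exact h
      · intro ha
        exact Finset.mem_inter.mpr ⟨hS ha, Finset.mem_insert_of_mem ha⟩
    rw [hXT, hTX, Finset.sum_image (fun x _ y _ h => Option.some_injective _ h), hr0]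
    simp [Option.elim]

lemma not_linIndep_of_rel {X : Finset (Option (Sym2 V))} (g : Sym2 V → ℝ) (r : ℝ)
    (S : Finset (Sym2 V)) (hS : S.image some ⊆ X) (hr : r ≠ 0 → none ∈ X)
    (hsupp : ∀ e, g e ≠ 0 → e ∈ S)
    (hsum : ∑ e ∈ S, g e • v (some e) + r • v none = 0)
    (hnz : (∃ e ∈ S, g e ≠ 0 ∧ some e ∈ X) ∨ (r ≠ 0)) :
    ¬ LinearIndependent ℝ (fun a : {a // a ∈ X} => v a.1) := by
  rw [Fintype.not_linearIndependent_iff]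
  refine ⟨fun a => Option.elim a.1 r g, ?_, ?_⟩
  · have : ∑ a : {a // a ∈ X}, (Option.elim a.1 r g) • v a.1
        = ∑ a ∈ X, (Option.elim a r g) • v a :=
      Finset.sum_coe_sort X (fun a => (Option.elim a r g) • v a)
    rw [this, sum_option g r X S hS hr hsupp, hsum]
  · rcases hnz with ⟨e, _, hge, heX⟩ | hrne
    · exact ⟨⟨some e, heX⟩, hge⟩
    · exact ⟨⟨none, hr hrne⟩, hrne⟩

lemma bad_dep (hN : IsNetwork Γ B) (hu : Set.InjOn u (B : Set V)) (hvhat : v none = (0, 1))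
    (hvE : VE Γ B u v) {X : Finset (Option (Sym2 V))} (hbad : Bad Γ B X) :
    ¬ LinearIndependent ℝ (fun a : {a // a ∈ X} => v a.1) := by
  rcases hbad with ⟨a, w, hc, hcX⟩ | ⟨C₁, C₂, hC₁, hC₂, hne, hX₁, hX₂⟩ | ⟨hnone, C, hC, hCX⟩
  · -- cycle
    obtain ⟨g, hg1, hg2, hg3⟩ := telescope hN hvE w hc.isTrail.edges_nodup
    have hedges : w.edges ≠ [] := by
      cases hw : w with
      | nil => rw [hw] at hc; exact absurd rfl hc.ne_nil
      | cons h q => simp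
    obtain ⟨e₀, he₀⟩ := List.exists_mem_of_ne_nil _ hedges
    refine not_linIndep_of_rel g 0 w.edges.toFinset ?_ (by simp) ?_ ?_ ?_
    · intro x hx
      obtain ⟨e, he, rfl⟩ := Finset.mem_image.mp hx
      exact hcX e (List.mem_toFinset.mp he)
    · exact fun e hge => List.mem_toFinset.mpr (hg1 e hge)
    · rw [hg3, sub_self, zero_smul, add_zero]
    · exact Or.inl ⟨e₀, List.mem_toFinset.mpr he₀, hg2 e₀ he₀, hcX e₀ he₀⟩
  · -- two crossings
    obtain ⟨g₁, r₁, hr₁, hg₁s, hg₁a, _, hs₁⟩ := crossing_sum hN hu hvE hC₁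
    obtain ⟨g₂, r₂, hr₂, hg₂s, hg₂a, _, hs₂⟩ := crossing_sum hN hu hvE hC₂
    set g : Sym2 V → ℝ := fun e => r₂ * g₁ e - r₁ * g₂ e with hg
    have hsupp : ∀ e, g e ≠ 0 → e ∈ C₁ ∪ C₂ := by
      intro e hge
      by_contra hcon
      rw [Finset.mem_union, not_or] at hcon
      have h1 : g₁ e = 0 := by by_contra hh; exact hcon.1 (hg₁s e hh)
      have h2 : g₂ e = 0 := by by_contra hh; exact hcon.2 (hg₂s e hh)
      apply hge; rw [hg]; simp [h1, h2]
    have hSX : (C₁ ∪ C₂).image some ⊆ X := by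
      intro x hx
      obtain ⟨e, he, rfl⟩ := Finset.mem_image.mp hx
      rcases Finset.mem_union.mp he with h | h
      · exact hX₁ e h
      · exact hX₂ e h
    have hsum : ∑ e ∈ C₁ ∪ C₂, g e • v (some e) + (0:ℝ) • v none = 0 := by
      rw [zero_smul, add_zero]
      have hsplit : ∑ e ∈ C₁ ∪ C₂, g e • v (some e)
          = r₂ • ∑ e ∈ C₁ ∪ C₂, g₁ e • v (some e)
            - r₁ • ∑ e ∈ C₁ ∪ C₂, g₂ e • v (some e) := by
        rw [Finset.smul_sum, Finset.smul_sum, ← Finset.sum_sub_distrib]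
        refine Finset.sum_congr rfl fun e _ => ?_
        rw [hg]; simp only [sub_smul, mul_smul]
      have he₁ : ∑ e ∈ C₁ ∪ C₂, g₁ e • v (some e) = ∑ e ∈ C₁, g₁ e • v (some e) := by
        refine (Finset.sum_subset Finset.subset_union_left fun e _ he => ?_).symm
        have : g₁ e = 0 := by by_contra hh; exact he (hg₁s e hh)
        simp [this]
      have he₂ : ∑ e ∈ C₁ ∪ C₂, g₂ e • v (some e) = ∑ e ∈ C₂, g₂ e • v (some e) := by
        refine (Finset.sum_subset Finset.subset_union_right fun e _ he => ?_).symm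
        have : g₂ e = 0 := by by_contra hh; exact he (hg₂s e hh)
        simp [this]
      rw [hsplit, he₁, he₂, hs₁, hs₂]
      ext
      · simp
      · simp [mul_comm]
    have hnz : ∃ e ∈ C₁ ∪ C₂, g e ≠ 0 ∧ some e ∈ X := by
      by_cases hss : C₁ ⊆ C₂
      · obtain ⟨e, he₂, he₁⟩ := Finset.exists_of_ssubset (Finset.ssubset_iff_subset_ne.mpr ⟨hss, hne⟩)
        refine ⟨e, Finset.mem_union_right _ he₂, ?_, hX₂ e he₂⟩
        have h1 : g₁ e = 0 := by by_contra hh; exact he₁ (hg₁s e hh)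
        rw [hg]; simp only [h1, mul_zero, zero_sub, ne_eq, neg_eq_zero, mul_eq_zero, not_or]
        exact ⟨hr₁, hg₂a e he₂⟩
      · obtain ⟨e, he₁, he₂⟩ := Finset.not_subset.mp hss
        refine ⟨e, Finset.mem_union_left _ he₁, ?_, hX₁ e he₁⟩
        have h2 : g₂ e = 0 := by by_contra hh; exact he₂ (hg₂s e hh)
        rw [hg]; simp only [h2, mul_zero, sub_zero, ne_eq, mul_eq_zero, not_or]
        exact ⟨hr₂, hg₁a e he₁⟩
    exact not_linIndep_of_rel g 0 (C₁ ∪ C₂) hSX (by simp) hsupp hsum (Or.inl hnz)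
  · -- ê plus crossing
    obtain ⟨g, r, hr, hgs, _, _, hs⟩ := crossing_sum hN hu hvE hC
    have hSX : C.image some ⊆ X := by
      intro x hx
      obtain ⟨e, he, rfl⟩ := Finset.mem_image.mp hx
      exact hCX e he
    refine not_linIndep_of_rel g (-r) C hSX (fun _ => hnone) hgs ?_ (Or.inr (by simpa using hr))
    rw [hs, hvhat]
    ext
    · simp
    · simp


lemma acyclic_of_nocycle {S : Finset (Sym2 V)} (hSE : (S : Set (Sym2 V)) ⊆ Γ.edgeSet)
    (h : ∀ (a : V) (w : Γ.Walk a a), w.IsCycle → ∃ e ∈ w.edges, e ∉ S) :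
    (SimpleGraph.fromEdgeSet (S : Set (Sym2 V))).IsAcyclic := by
  intro a c hc
  have hsub : ∀ e ∈ c.edges, e ∈ Γ.edgeSet := fun e he => by
    have h1 := SimpleGraph.Walk.edges_subset_edgeSet c he
    rw [SimpleGraph.edgeSet_fromEdgeSet] at h1
    exact hSE h1.1
  obtain ⟨e, he, heS⟩ := h a (c.transfer Γ hsub) (hc.transfer hsub)
  rw [SimpleGraph.Walk.edges_transfer] at he
  have h1 := SimpleGraph.Walk.edges_subset_edgeSet c he
  rw [SimpleGraph.edgeSet_fromEdgeSet] at h1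
  exact heS h1.1

lemma nocycle_of_acyclic {S : Finset (Sym2 V)} (hSE : (S : Set (Sym2 V)) ⊆ Γ.edgeSet)
    (hac : (SimpleGraph.fromEdgeSet (S : Set (Sym2 V))).IsAcyclic)
    {a : V} (w : Γ.Walk a a) (hw : w.IsCycle) (hsub : ∀ e ∈ w.edges, e ∈ S) : False := by
  have h2 : ∀ e ∈ w.edges, e ∈ (SimpleGraph.fromEdgeSet (S : Set (Sym2 V))).edgeSet := by
    intro e he
    rw [SimpleGraph.edgeSet_fromEdgeSet]
    exact ⟨hsub e he, Γ.not_isDiag_of_mem_edgeSet (w.edges_subset_edgeSet he)⟩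
  exact hac _ (hw.transfer h2)

lemma acyclic_mono {S T : Set (Sym2 V)} (hST : S ⊆ T)
    (h : (SimpleGraph.fromEdgeSet T).IsAcyclic) : (SimpleGraph.fromEdgeSet S).IsAcyclic := by
  intro a c hc
  have hsub : ∀ e ∈ c.edges, e ∈ (SimpleGraph.fromEdgeSet T).edgeSet := fun e he => by
    have h1 := c.edges_subset_edgeSet he
    rw [SimpleGraph.edgeSet_fromEdgeSet] at h1 ⊢
    exact ⟨hST h1.1, h1.2⟩
  exact h _ (hc.transfer hsub)

lemma indep_nobad {X : Finset (Option (Sym2 V))}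
    (h : (∃ F, Sigma1 Γ B F ∧ X ⊆ F.image some) ∨
         (∃ F, Sigma0 Γ B F ∧ X ⊆ insert none (F.image some))) : ¬ Bad Γ B X := by
  intro hbad
  rcases h with ⟨F, ⟨hgrove, hC⟩, hXF⟩ | ⟨F, ⟨hgrove, hnoC⟩, hXF⟩
  · have hmem : ∀ e : Sym2 V, some e ∈ X → e ∈ F := by
      intro e he
      obtain ⟨e', he', heq⟩ := Finset.mem_image.mp (hXF he)
      obtain rfl : e' = e := by simpa using heq
      exact he'
    have hnone : none ∉ X := fun hn => by
      obtain ⟨e', _, heq⟩ := Finset.mem_image.mp (hXF hn)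
      cases heq
    rcases hbad with ⟨a, w, hw, hsub⟩ | ⟨C₁, C₂, h1, h2, hne, hs1, hs2⟩ | ⟨hn, _⟩
    · exact nocycle_of_acyclic hgrove.1 hgrove.2.1 w hw (fun e he => hmem e (hsub e he))
    · obtain ⟨C, _, hCuniq⟩ := hC
      have e1 : C₁ = C := hCuniq C₁ ⟨h1, fun e he => hmem e (hs1 e he)⟩
      have e2 : C₂ = C := hCuniq C₂ ⟨h2, fun e he => hmem e (hs2 e he)⟩
      exact hne (e1.trans e2.symm)
    · exact hnone hn
  · have hmem : ∀ e : Sym2 V, some e ∈ X → e ∈ F := by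
      intro e he
      rcases Finset.mem_insert.mp (hXF he) with hh | hh
      · cases hh
      · obtain ⟨e', he', heq⟩ := Finset.mem_image.mp hh
        obtain rfl : e' = e := by simpa using heq
        exact he'
    rcases hbad with ⟨a, w, hw, hsub⟩ | ⟨C₁, C₂, h1, _, _, hs1, _⟩ | ⟨_, C, hC', hs⟩
    · exact nocycle_of_acyclic hgrove.1 hgrove.2.1 w hw (fun e he => hmem e (hsub e he))
    · exact hnoC C₁ h1 (fun e he => hmem e (hs1 e he))
    · exact hnoC C hC' (fun e he => hmem e (hs e he))

lemma not_mem_edge_of_not_mem_support {a b x : V} {q : Γ.Walk a b} (hx : x ∉ q.support)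
    {e : Sym2 V} (he : e ∈ q.edges) : x ∉ e := by
  intro hxe
  obtain ⟨t, rfl⟩ := Sym2.mem_iff_exists.mp hxe
  exact hx (q.fst_mem_support_of_mem_edges he)

lemma path_loop_eq_nil {w : V} (p : Γ.Walk w w) (hp : p.IsPath) : p = SimpleGraph.Walk.nil := by
  cases p with
  | nil => rfl
  | cons h q =>
    exfalso
    have := (SimpleGraph.Walk.cons_isPath_iff _ _).mp hp
    exact this.2 q.end_mem_support

lemma path_ne_of_edges_ne_nil {x y : V} {p : Γ.Walk x y} (hp : p.IsPath)
    (hne : p.edges ≠ []) : x ≠ y := by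
  intro h
  subst h
  rw [path_loop_eq_nil p hp] at hne
  simp at hne

lemma path_start_unique_edge {x y : V} {p : Γ.Walk x y} (hp : p.IsPath)
    {e e' : Sym2 V} (he : e ∈ p.edges) (he' : e' ∈ p.edges) (hxe : x ∈ e) (hxe' : x ∈ e') :
    e = e' := by
  cases p with
  | nil => simp at he
  | cons h q =>
    rename_i w
    have hx : x ∉ q.support := ((SimpleGraph.Walk.cons_isPath_iff _ _).mp hp).2
    have key : ∀ f : Sym2 V, f ∈ (SimpleGraph.Walk.cons h q).edges → x ∈ f → f = s(x, w) := by
      intro f hf hxf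
      rw [SimpleGraph.Walk.edges_cons, List.mem_cons] at hf
      rcases hf with rfl | hf
      · rfl
      · exact absurd hxf (not_mem_edge_of_not_mem_support hx hf)
    rw [key e he hxe, key e' he' hxe']

lemma lemA (hN : IsNetwork Γ B) (hvE : VE Γ B u v) :
    ∀ {x b' : V} (p : Γ.Walk x b'), b' ∈ B → p.IsPath →
      (∀ y ∈ p.support, y ≠ b' → y ∉ B) → ∀ (hx : x ∉ B) (g : Sym2 V → ℝ),
      (∀ (w : V) (hw : w ∉ B), w ≠ x →
        (∑ e ∈ p.edges.toFinset, g e • v (some e)).1 ⟨w, hw⟩ = 0) →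
      ∑ e ∈ p.edges.toFinset, g e • v (some e)
        = ((∑ e ∈ p.edges.toFinset, g e • v (some e)).1 ⟨x, hx⟩) • (phi B u x - phi B u b') := by
  intro x b' p
  induction p with
  | nil => intro hb' _ _ hx _ _; exact absurd hb' hx
  | @cons x w b' h q ih =>
    intro hb' hp hint hx g hcoord
    have hqp : q.IsPath ∧ x ∉ q.support := (SimpleGraph.Walk.cons_isPath_iff _ _).mp hp
    have hnd : s(x, w) ∉ q.edges := by
      have := hp.isTrail.edges_nodup
      rw [SimpleGraph.Walk.edges_cons, List.nodup_cons] at this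
      exact this.1
    have hnotmem : s(x, w) ∉ q.edges.toFinset := by simpa using hnd
    have hsplit : ∑ e ∈ (SimpleGraph.Walk.cons h q).edges.toFinset, g e • v (some e)
        = g s(x, w) • v (some s(x, w)) + ∑ e ∈ q.edges.toFinset, g e • v (some e) := by
      rw [SimpleGraph.Walk.edges_cons, List.toFinset_cons, Finset.sum_insert hnotmem]
    set Sq := ∑ e ∈ q.edges.toFinset, g e • v (some e) with hSq
    set S := ∑ e ∈ (SimpleGraph.Walk.cons h q).edges.toFinset, g e • v (some e) with hS
    obtain ⟨c, hc1, hvc⟩ := edgeVec hN hvE h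
    have hxw : x ≠ w := h.ne
    by_cases hwB : w ∈ B
    · -- then w = b' and q = nil
      have hwb' : w = b' := by
        by_contra hcon
        exact hint w (by simp [SimpleGraph.Walk.support_cons]) hcon hwB
      subst hwb'
      have hqnil : q = SimpleGraph.Walk.nil := path_loop_eq_nil q hqp.1
      have hSq0 : Sq = 0 := by rw [hSq, hqnil]; simp
      have hSe : S = g s(x, w) • v (some s(x, w)) + 0 := by rw [hsplit, hSq0]
      rw [add_zero] at hSe
      have hcoeff : S.1 ⟨x, hx⟩ = g s(x, w) * c := by
        rw [hSe, hvc]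
        have h1 : ((phi B u x - phi B u w).1) ⟨x, hx⟩ = 1 := by
          have hwx : w ≠ x := Ne.symm hxw
          simp [Prod.fst_sub, phi_fst, hwx]
        rw [smul_smul]
        simp only [Prod.smul_fst, Pi.smul_apply, Prod.fst_sub]
        rw [show ((phi B u x).1 - (phi B u w).1) ⟨x, hx⟩
            = ((phi B u x - phi B u w).1) ⟨x, hx⟩ from rfl, h1]
        simp [mul_comm]
      rw [hcoeff, hSe, hvc, smul_smul, mul_comm]
    · -- main inductive case
      have hwx' : w ≠ x := Ne.symm hxw
      have hcoordq : ∀ (w' : V) (hw' : w' ∉ B), w' ≠ w → Sq.1 ⟨w', hw'⟩ = 0 := by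
        intro w' hw' hw'w
        have hq_edges_zero : ∀ e ∈ q.edges.toFinset, x ∉ e := fun e he =>
          not_mem_edge_of_not_mem_support hqp.2 (List.mem_toFinset.mp he)
        by_cases hw'x : w' = x
        · subst hw'x
          rw [hSq, sum_coord]
          refine Finset.sum_eq_zero fun e he => ?_
          have hxe : w' ∉ e := hq_edges_zero e he
          have heE : e ∈ Γ.edgeSet := q.edges_subset_edgeSet (List.mem_toFinset.mp he)
          rw [Prod.smul_fst, Pi.smul_apply, coord_eq_zero hN hvE heE hw' hxe, smul_zero]
        · have h0 : S.1 ⟨w', hw'⟩ = 0 := hcoord w' hw' hw'x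
          have hadd : S.1 ⟨w', hw'⟩
              = (g s(x, w) • v (some s(x, w))).1 ⟨w', hw'⟩ + Sq.1 ⟨w', hw'⟩ := by
            rw [hsplit]; rfl
          have hv0 : (v (some s(x, w))).1 ⟨w', hw'⟩ = 0 := by
            refine coord_eq_zero hN hvE (Γ.mem_edgeSet.mpr h) hw' ?_
            intro hmem
            rcases Sym2.mem_iff.mp hmem with rfl | rfl
            · exact hw'x rfl
            · exact hw'w rfl
          rw [h0, Prod.smul_fst, Pi.smul_apply, hv0, smul_zero, zero_add] at hadd
          exact hadd.symm
      have hintq : ∀ y ∈ q.support, y ≠ b' → y ∉ B := fun y hy =>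
        hint y (by rw [SimpleGraph.Walk.support_cons]; exact List.mem_cons_of_mem _ hy)
      have hIH := ih hb' hqp.1 hintq hwB g hcoordq
      set a := Sq.1 ⟨w, hwB⟩ with ha
      -- compute a = c * g s(x, w)
      have hvw : (v (some s(x, w))).1 ⟨w, hwB⟩ = c * (-1) := by
        rw [hvc]
        simp only [Prod.smul_fst, Pi.smul_apply, Prod.fst_sub, Pi.sub_apply, smul_eq_mul]
        rw [phi_fst x w hwB, phi_fst w w hwB, if_neg hxw, if_pos rfl]
        ring_nf
      have hSw : S.1 ⟨w, hwB⟩ = 0 := hcoord w hwB hwx'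
      have hadd : S.1 ⟨w, hwB⟩ = g s(x, w) * ((v (some s(x, w))).1 ⟨w, hwB⟩) + a := by
        rw [hsplit]; rfl
      have haval : a = c * g s(x, w) := by
        rw [hSw, hvw] at hadd
        have := hadd.symm
        linarith [this]
      -- combine
      have hfinal : S = (c * g s(x, w)) • (phi B u x - phi B u b') := by
        rw [hsplit, hSq, hIH, haval, hvc, smul_smul, mul_comm (g s(x, w)) c,
          ← smul_add, sub_add_sub_cancel]
      have hcx : S.1 ⟨x, hx⟩ = c * g s(x, w) := by
        rw [hfinal]
        simp only [Prod.smul_fst, Pi.smul_apply, Prod.fst_sub, Pi.sub_apply, smul_eq_mul]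
        rw [phi_fst x x hx, phi_fst b' x hx, if_pos rfl,
          if_neg (fun hh : b' = x => hx (hh ▸ hb'))]
        ring
      rw [hcx, hfinal]


lemma bad_mono {X X' : Finset (Option (Sym2 V))} (hXX : X' ⊆ X) (h : Bad Γ B X') :
    Bad Γ B X := by
  rcases h with ⟨a, w, hw, hs⟩ | ⟨C₁, C₂, h1, h2, hne, hs1, hs2⟩ | ⟨hn, C, hC, hs⟩
  · exact Or.inl ⟨a, w, hw, fun e he => hXX (hs e he)⟩
  · exact Or.inr (Or.inl ⟨C₁, C₂, h1, h2, hne, fun e he => hXX (hs1 e he),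
      fun e he => hXX (hs2 e he)⟩)
  · exact Or.inr (Or.inr ⟨hXX hn, C, hC, fun e he => hXX (hs e he)⟩)

lemma extend_step (hN : IsNetwork Γ B) {X : Finset (Option (Sym2 V))}
    (hXg : X ⊆ ground Γ) (hnb : ¬ Bad Γ B X)
    (hnoleaf : ∀ e₀ : Sym2 V, some e₀ ∈ X → ∀ w, w ∉ B → w ∈ e₀ →
      ∃ e, some e ∈ X ∧ w ∈ e ∧ e ≠ e₀)
    {x y : V} (p : Γ.Walk x y) (hp : p.IsPath) (hpX : ∀ e ∈ p.edges, some e ∈ X)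
    (hx : x ∉ B) (hnonnil : p.edges ≠ []) :
    ∃ (z : V) (h' : Γ.Adj z x), z ∉ p.support ∧ some s(z, x) ∈ X := by
  cases p with
  | nil => simp at hnonnil
  | cons h q =>
    rename_i w
    have he₀X : some s(x, w) ∈ X := hpX _ (by simp)
    obtain ⟨e, heX, hxe, hene⟩ := hnoleaf s(x, w) he₀X x hx (Sym2.mem_mk_left x w)
    obtain ⟨z, rfl⟩ := Sym2.mem_iff_exists.mp hxe
    have hadj : Γ.Adj x z := Γ.mem_edgeSet.mp (mem_ground_edge hXg heX)
    refine ⟨z, hadj.symm, ?_, by rwa [Sym2.eq_swap]⟩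
    intro hz
    set pp := SimpleGraph.Walk.cons h q with hpp
    have hq' : (pp.takeUntil z hz).IsPath := hp.takeUntil hz
    have hcyc : (SimpleGraph.Walk.cons hadj.symm (pp.takeUntil z hz)).IsCycle := by
      rw [SimpleGraph.Walk.cons_isCycle_iff]
      refine ⟨hq', fun hmem => ?_⟩
      have hsub := SimpleGraph.Walk.edges_takeUntil_subset pp hz hmem
      have : s(z, x) = s(x, w) :=
        path_start_unique_edge hp hsub (by simp [hpp]) (Sym2.mem_mk_right z x)
          (Sym2.mem_mk_left x w)
      rw [Sym2.eq_swap] at this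
      exact hene this
    apply hnb
    refine Or.inl ⟨z, _, hcyc, ?_⟩
    intro e' he'
    rw [SimpleGraph.Walk.edges_cons, List.mem_cons] at he'
    rcases he' with rfl | he'
    · rwa [Sym2.eq_swap]
    · exact hpX e' (SimpleGraph.Walk.edges_takeUntil_subset pp hz he')

lemma extend_left (hN : IsNetwork Γ B) {X : Finset (Option (Sym2 V))}
    (hXg : X ⊆ ground Γ) (hnb : ¬ Bad Γ B X)
    (hnoleaf : ∀ e₀ : Sym2 V, some e₀ ∈ X → ∀ w, w ∉ B → w ∈ e₀ →
      ∃ e, some e ∈ X ∧ w ∈ e ∧ e ≠ e₀) {f : Sym2 V} :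
    ∀ (n : ℕ) {x y : V} (p : Γ.Walk x y), p.IsPath →
      (∀ e ∈ p.edges, some e ∈ X) →
      (∀ z ∈ p.support, z ≠ x → z ≠ y → z ∉ B) → f ∈ p.edges →
      Fintype.card V ≤ p.support.length + n →
      ∃ (x' : V) (p' : Γ.Walk x' y), p'.IsPath ∧ (∀ e ∈ p'.edges, some e ∈ X) ∧
        (∀ z ∈ p'.support, z ≠ x' → z ≠ y → z ∉ B) ∧ f ∈ p'.edges ∧ x' ∈ B := by
  intro n
  induction n with
  | zero =>
    intro x y p hp hpX hint hf hcard
    by_cases hxB : x ∈ B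
    · exact ⟨x, p, hp, hpX, hint, hf, hxB⟩
    · exfalso
      have hnonnil : p.edges ≠ [] := fun hh => by simp [hh] at hf
      obtain ⟨z, h', hz, heX⟩ := extend_step hN hXg hnb hnoleaf p hp hpX hxB hnonnil
      have hp' : (SimpleGraph.Walk.cons h' p).IsPath :=
        (SimpleGraph.Walk.cons_isPath_iff _ _).mpr ⟨hp, hz⟩
      have hlen : (SimpleGraph.Walk.cons h' p).support.length ≤ Fintype.card V :=
        hp'.support_nodup.length_le_card
      rw [SimpleGraph.Walk.support_cons, List.length_cons] at hlen
      omega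
  | succ n ih =>
    intro x y p hp hpX hint hf hcard
    by_cases hxB : x ∈ B
    · exact ⟨x, p, hp, hpX, hint, hf, hxB⟩
    · have hnonnil : p.edges ≠ [] := fun hh => by simp [hh] at hf
      obtain ⟨z, h', hz, heX⟩ := extend_step hN hXg hnb hnoleaf p hp hpX hxB hnonnil
      have hp' : (SimpleGraph.Walk.cons h' p).IsPath :=
        (SimpleGraph.Walk.cons_isPath_iff _ _).mpr ⟨hp, hz⟩
      have hpX' : ∀ e ∈ (SimpleGraph.Walk.cons h' p).edges, some e ∈ X := by
        intro e he
        rw [SimpleGraph.Walk.edges_cons, List.mem_cons] at he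
        rcases he with rfl | he
        · exact heX
        · exact hpX e he
      have hint' : ∀ z' ∈ (SimpleGraph.Walk.cons h' p).support, z' ≠ z → z' ≠ y → z' ∉ B := by
        intro z' hz' hz'z hz'y
        rw [SimpleGraph.Walk.support_cons, List.mem_cons] at hz'
        rcases hz' with rfl | hz'
        · exact absurd rfl hz'z
        · by_cases hz'x : z' = x
          · subst hz'x; exact hxB
          · exact hint z' hz' hz'x hz'y
      have hf' : f ∈ (SimpleGraph.Walk.cons h' p).edges := by
        rw [SimpleGraph.Walk.edges_cons]; exact List.mem_cons_of_mem _ hf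
      have hcard' : Fintype.card V ≤ (SimpleGraph.Walk.cons h' p).support.length + n := by
        rw [SimpleGraph.Walk.support_cons, List.length_cons]
        omega
      exact ih _ hp' hpX' hint' hf' hcard'

lemma exists_crossing_walk (hN : IsNetwork Γ B) {X : Finset (Option (Sym2 V))}
    (hXg : X ⊆ ground Γ) (hnb : ¬ Bad Γ B X)
    (hnoleaf : ∀ e₀ : Sym2 V, some e₀ ∈ X → ∀ w, w ∉ B → w ∈ e₀ →
      ∃ e, some e ∈ X ∧ w ∈ e ∧ e ≠ e₀) {f : Sym2 V} (hf : some f ∈ X) :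
    ∃ (b b' : V) (p : Γ.Walk b b'), p.IsPath ∧ b ∈ B ∧ b' ∈ B ∧ b ≠ b' ∧
      (∀ z ∈ p.support, z ≠ b → z ≠ b' → z ∉ B) ∧
      (∀ e ∈ p.edges, some e ∈ X) ∧ f ∈ p.edges := by
  induction f with
  | _ x₀ y₀ =>
    have hadj : Γ.Adj x₀ y₀ := Γ.mem_edgeSet.mp (mem_ground_edge hXg hf)
    have hne : x₀ ≠ y₀ := hadj.ne
    set p₀ : Γ.Walk x₀ y₀ := SimpleGraph.Walk.cons hadj SimpleGraph.Walk.nil with hp₀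
    have hp₀p : p₀.IsPath := by
      rw [hp₀, SimpleGraph.Walk.cons_isPath_iff]
      exact ⟨SimpleGraph.Walk.IsPath.nil, by simpa using hne⟩
    have hp₀X : ∀ e ∈ p₀.edges, some e ∈ X := by
      intro e he
      rw [hp₀] at he
      simp only [SimpleGraph.Walk.edges_cons, SimpleGraph.Walk.edges_nil,
        List.mem_singleton] at he
      subst he; exact hf
    have hp₀int : ∀ z ∈ p₀.support, z ≠ x₀ → z ≠ y₀ → z ∉ B := by
      intro z hz hzx hzy
      rw [hp₀] at hz
      simp only [SimpleGraph.Walk.support_cons, SimpleGraph.Walk.support_nil,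
        List.mem_cons, List.mem_singleton] at hz
      rcases hz with rfl | rfl | h
      · exact absurd rfl hzx
      · exact absurd rfl hzy
      · simp at h
    have hfe : s(x₀, y₀) ∈ p₀.edges := by rw [hp₀]; simp
    obtain ⟨x', p₁, hp₁, hp₁X, hp₁int, hfe₁, hx'B⟩ :=
      extend_left hN hXg hnb hnoleaf (Fintype.card V) p₀ hp₀p hp₀X hp₀int hfe (by omega)
    have hp₂ : p₁.reverse.IsPath := hp₁.reverse
    have hp₂X : ∀ e ∈ p₁.reverse.edges, some e ∈ X := by
      intro e he
      rw [SimpleGraph.Walk.edges_reverse, List.mem_reverse] at he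
      exact hp₁X e he
    have hp₂int : ∀ z ∈ p₁.reverse.support, z ≠ y₀ → z ≠ x' → z ∉ B := by
      intro z hz hzy hzx
      rw [SimpleGraph.Walk.support_reverse, List.mem_reverse] at hz
      exact hp₁int z hz hzx hzy
    have hfe₂ : s(x₀, y₀) ∈ p₁.reverse.edges := by
      rw [SimpleGraph.Walk.edges_reverse, List.mem_reverse]; exact hfe₁
    obtain ⟨b, p₃, hp₃, hp₃X, hp₃int, hfe₃, hbB⟩ :=
      extend_left hN hXg hnb hnoleaf (Fintype.card V) p₁.reverse hp₂ hp₂X hp₂int hfe₂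
        (by omega)
    have hedges_ne : p₃.edges ≠ [] := fun hh => by simp [hh] at hfe₃
    exact ⟨b, x', p₃, hp₃, hbB, hx'B, path_ne_of_edges_ne_nil hp₃ hedges_ne, hp₃int,
      hp₃X, hfe₃⟩


lemma nobad_rel (hN : IsNetwork Γ B) (hu : Set.InjOn u (B : Set V))
    (hvhat : v none = (0, 1)) (hvE : VE Γ B u v) :
    ∀ (n : ℕ) (X : Finset (Option (Sym2 V))), X.card ≤ n → X ⊆ ground Γ → ¬ Bad Γ B X →
      ∀ g : Option (Sym2 V) → ℝ, ∑ a ∈ X, g a • v a = 0 → ∀ a ∈ X, g a = 0 := by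
  intro n
  induction n with
  | zero =>
    intro X hcard _ _ g _ a ha
    rw [Finset.card_eq_zero.mp (Nat.le_zero.mp hcard)] at ha
    simp at ha
  | succ n ih =>
    intro X hcard hXg hnb g hsum
    -- peeling principle
    have peel : ∀ e₀ : Sym2 V, some e₀ ∈ X → g (some e₀) = 0 → ∀ a ∈ X, g a = 0 := by
      intro e₀ he₀ hg0 a ha
      by_cases hae : a = some e₀
      · subst hae; exact hg0
      · have hcard' : (X.erase (some e₀)).card ≤ n := by
          have := Finset.card_erase_of_mem he₀
          omega
        have hsub : X.erase (some e₀) ⊆ X := Finset.erase_subset _ _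
        have hsum' : ∑ a ∈ X.erase (some e₀), g a • v a = 0 := by
          have h2 := Finset.sum_erase_add X (fun a => g a • v a) he₀
          rw [hsum] at h2
          simp only [hg0, zero_smul, add_zero] at h2
          exact h2
        exact ih (X.erase (some e₀)) hcard' (hsub.trans hXg)
          (fun hb => hnb (bad_mono hsub hb)) g hsum' a (Finset.mem_erase.mpr ⟨hae, ha⟩)
    by_cases hleaf : ∃ e₀ : Sym2 V, some e₀ ∈ X ∧ ∃ w, ∃ hw : w ∉ B, w ∈ e₀ ∧
        ∀ e, some e ∈ X → w ∈ e → e = e₀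
    · obtain ⟨e₀, he₀, w, hw, hwe₀, huniq⟩ := hleaf
      have hzero : ∑ a ∈ X, (g a • v a).1 ⟨w, hw⟩ = 0 := by
        rw [← sum_coord X (fun a => g a • v a) hw, hsum]
        simp
      have hsingle : ∑ a ∈ X, (g a • v a).1 ⟨w, hw⟩
          = (g (some e₀) • v (some e₀)).1 ⟨w, hw⟩ := by
        refine Finset.sum_eq_single (some e₀) ?_ (fun hn => absurd he₀ hn)
        intro a haX hane
        cases a with
        | none =>
          rw [hvhat]
          simp [Prod.smul_fst]
        | some e =>
          have hwe : w ∉ e := fun hmem => hane (by rw [huniq e haX hmem])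
          rw [Prod.smul_fst, Pi.smul_apply,
            coord_eq_zero hN hvE (mem_ground_edge hXg haX) hw hwe, smul_zero]
      have : g (some e₀) * (v (some e₀)).1 ⟨w, hw⟩ = 0 := by
        rw [← smul_eq_mul]
        have := hzero
        rw [hsingle] at this
        simpa [Prod.smul_fst] using this
      have hg0 : g (some e₀) = 0 :=
        (mul_eq_zero.mp this).resolve_right
          (coord_ne_zero hN hvE (mem_ground_edge hXg he₀) hw hwe₀)
      exact peel e₀ he₀ hg0
    · push_neg at hleaf
      have hnoleaf : ∀ e₀ : Sym2 V, some e₀ ∈ X → ∀ w, w ∉ B → w ∈ e₀ →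
          ∃ e, some e ∈ X ∧ w ∈ e ∧ e ≠ e₀ := by
        intro e₀ he₀ w hw hwe₀
        obtain ⟨e, heX, hwe, hne⟩ := hleaf e₀ he₀ w hw hwe₀
        exact ⟨e, heX, hwe, hne⟩
      by_cases hedge : ∃ e : Sym2 V, some e ∈ X
      · obtain ⟨e₁, he₁⟩ := hedge
        obtain ⟨b, b', p, hp, hbB, hb'B, hbb', hint, hpX, hfe⟩ :=
          exists_crossing_walk hN hXg hnb hnoleaf he₁
        have hcrossing : IsCrossing Γ B p.edges.toFinset :=
          ⟨b, b', p, hp, hbB, hb'B, hbb', hint, rfl⟩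
        have hall : ∀ e : Sym2 V, some e ∈ X → e ∈ p.edges := by
          intro f' hf'
          by_contra hf'n
          obtain ⟨b₂, b₂', p₂, hp2, hbB2, hb'B2, hbb'2, hint2, hpX2, hfe2⟩ :=
            exists_crossing_walk hN hXg hnb hnoleaf hf'
          refine hnb (Or.inr (Or.inl ⟨p.edges.toFinset, p₂.edges.toFinset, hcrossing,
            ⟨b₂, b₂', p₂, hp2, hbB2, hb'B2, hbb'2, hint2, rfl⟩, ?_,
            fun e he => hpX e (List.mem_toFinset.mp he),
            fun e he => hpX2 e (List.mem_toFinset.mp he)⟩))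
          intro hEq
          exact hf'n (List.mem_toFinset.mp (hEq ▸ List.mem_toFinset.mpr hfe2))
        have hnone : none ∉ X := fun hn =>
          hnb (Or.inr (Or.inr ⟨hn, p.edges.toFinset, hcrossing,
            fun e he => hpX e (List.mem_toFinset.mp he)⟩))
        have hXeq : X = p.edges.toFinset.image some := by
          ext a
          constructor
          · intro haX
            cases a with
            | none => exact absurd haX hnone
            | some e =>
              exact Finset.mem_image_of_mem some (List.mem_toFinset.mpr (hall e haX))
          · intro haI
            obtain ⟨e, he, rfl⟩ := Finset.mem_image.mp haI
            exact hpX e (List.mem_toFinset.mp he)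
        -- now peel the first edge of the crossing
        cases p with
        | nil => exact absurd rfl hbb'
        | cons h q =>
          rename_i w₁
          have hqp : q.IsPath ∧ b ∉ q.support := (SimpleGraph.Walk.cons_isPath_iff _ _).mp hp
          have hw₁b : w₁ ≠ b := h.ne'
          have hw₁b' : w₁ ≠ b' := fun hh => hN.boundary_independent b hbB b' hb'B (hh ▸ h)
          have hw₁B : w₁ ∉ B := by
            refine hint w₁ ?_ hw₁b hw₁b'
            rw [SimpleGraph.Walk.support_cons]
            exact List.mem_cons_of_mem _ q.start_mem_support
          set g' : Sym2 V → ℝ := fun e => g (some e) with hg'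
          have hsum' : ∑ e ∈ (SimpleGraph.Walk.cons h q).edges.toFinset, g' e • v (some e)
              = 0 := by
            rw [← hsum, hXeq,
              Finset.sum_image (fun a _ c _ hac => Option.some_injective _ hac)]
          have hnd : s(b, w₁) ∉ q.edges := by
            have := hp.isTrail.edges_nodup
            rw [SimpleGraph.Walk.edges_cons, List.nodup_cons] at this
            exact this.1
          have hnotmem : s(b, w₁) ∉ q.edges.toFinset := by simpa using hnd
          have hsplit : ∑ e ∈ (SimpleGraph.Walk.cons h q).edges.toFinset, g' e • v (some e)
              = g' s(b, w₁) • v (some s(b, w₁))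
                + ∑ e ∈ q.edges.toFinset, g' e • v (some e) := by
            rw [SimpleGraph.Walk.edges_cons, List.toFinset_cons, Finset.sum_insert hnotmem]
          set Sq := ∑ e ∈ q.edges.toFinset, g' e • v (some e) with hSq
          obtain ⟨c, hc1, hvc⟩ := edgeVec hN hvE h
          have hcne : c ≠ 0 := by rcases hc1 with rfl | rfl <;> norm_num
          have hqint : ∀ y ∈ q.support, y ≠ b' → y ∉ B := by
            intro y hy hyb'
            have hyb : y ≠ b := fun hh => hqp.2 (hh ▸ hy)
            refine hint y ?_ hyb hyb'
            rw [SimpleGraph.Walk.support_cons]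
            exact List.mem_cons_of_mem _ hy
          have hcoordq : ∀ (w' : V) (hw' : w' ∉ B), w' ≠ w₁ → Sq.1 ⟨w', hw'⟩ = 0 := by
            intro w' hw' hw'w₁
            have hadd : (0 : ({w : V // w ∉ B} → ℝ) × ℝ).1 ⟨w', hw'⟩
                = (g' s(b, w₁) • v (some s(b, w₁))).1 ⟨w', hw'⟩ + Sq.1 ⟨w', hw'⟩ := by
              rw [← hsum', hsplit]; rfl
            have hv0 : (v (some s(b, w₁))).1 ⟨w', hw'⟩ = 0 := by
              refine coord_eq_zero hN hvE (Γ.mem_edgeSet.mpr h) hw' ?_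
              intro hmem
              rcases Sym2.mem_iff.mp hmem with rfl | rfl
              · exact hw' hbB
              · exact hw'w₁ rfl
            rw [Prod.smul_fst, Pi.smul_apply, hv0, smul_zero, zero_add] at hadd
            exact hadd.symm
          have hIH := lemA hN hvE q hb'B hqp.1 hqint hw₁B g' hcoordq
          set a := Sq.1 ⟨w₁, hw₁B⟩ with ha
          have hvw : (v (some s(b, w₁))).1 ⟨w₁, hw₁B⟩ = c * (-1) := by
            rw [hvc]
            simp only [Prod.smul_fst, Pi.smul_apply, Prod.fst_sub, Pi.sub_apply, smul_eq_mul]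
            rw [phi_fst b w₁ hw₁B, phi_fst w₁ w₁ hw₁B, if_neg (Ne.symm hw₁b), if_pos rfl]
            ring_nf
          have hadd : (0 : ({w : V // w ∉ B} → ℝ) × ℝ).1 ⟨w₁, hw₁B⟩
              = g' s(b, w₁) * ((v (some s(b, w₁))).1 ⟨w₁, hw₁B⟩) + a := by
            rw [← hsum', hsplit]; rfl
          have haval : a = c * g' s(b, w₁) := by
            rw [hvw] at hadd
            have h0 : (0 : ({w : V // w ∉ B} → ℝ) × ℝ).1 ⟨w₁, hw₁B⟩ = 0 := rfl
            rw [h0] at hadd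
            linarith [hadd]
          have hfinal : (0 : ({w : V // w ∉ B} → ℝ) × ℝ)
              = (c * g' s(b, w₁)) • (phi B u b - phi B u b') := by
            rw [← hsum', hsplit, hSq, hIH, haval, hvc, smul_smul,
              mul_comm (g' s(b, w₁)) c, ← smul_add, sub_add_sub_cancel]
          have hsnd : (0:ℝ) = (c * g' s(b, w₁)) * (u b - u b') := by
            have := congrArg Prod.snd hfinal
            simpa [Prod.smul_snd, Prod.snd_sub, phi_snd, hbB, hb'B] using this
          have hune : u b - u b' ≠ 0 := sub_ne_zero.mpr (fun hh => hbb' (hu hbB hb'B hh))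
          have hg0 : g (some s(b, w₁)) = 0 := by
            have := mul_eq_zero.mp hsnd.symm
            rcases this with h1 | h1
            · exact (mul_eq_zero.mp h1).resolve_left hcne
            · exact absurd h1 hune
          exact peel s(b, w₁) (hpX s(b, w₁) (by simp)) hg0
      · -- no edges at all
        push_neg at hedge
        have hXsub : ∀ a ∈ X, a = none := by
          intro a ha
          cases a with
          | none => rfl
          | some e => exact absurd ha (hedge e)
        intro a ha
        have hanone := hXsub a ha
        subst hanone
        have hsingle : ∑ a ∈ X, g a • v a = g none • v none := by
          refine Finset.sum_eq_single none (fun b hb hbn => absurd (hXsub b hb) hbn)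
            (fun hn => absurd ha hn)
        rw [hsingle, hvhat] at hsum
        have := congrArg Prod.snd hsum
        simpa using this


lemma nobad_linIndep (hN : IsNetwork Γ B) (hu : Set.InjOn u (B : Set V))
    (hvhat : v none = (0, 1)) (hvE : VE Γ B u v) {X : Finset (Option (Sym2 V))}
    (hX : X ⊆ ground Γ) (hnb : ¬ Bad Γ B X) :
    LinearIndependent ℝ (fun a : {a // a ∈ X} => v a.1) := by
  rw [Fintype.linearIndependent_iff]
  intro g hg i
  set G : Option (Sym2 V) → ℝ := fun a => if h : a ∈ X then g ⟨a, h⟩ else 0 with hG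
  have hsum : ∑ a ∈ X, G a • v a = 0 := by
    rw [← hg]
    rw [← Finset.sum_coe_sort X (fun a => G a • v a)]
    refine Finset.sum_congr rfl fun a _ => ?_
    have : G a.1 = g a := by rw [hG]; simp only [a.2, dif_pos]
    rw [this]
  have := nobad_rel hN hu hvhat hvE X.card X le_rfl hX hnb G hsum i.1 i.2
  rw [hG] at this
  simpa [i.2] using this

lemma find_boundary_edge {S : Finset (Sym2 V)} :
    ∀ {a c : V}, Γ.Walk a c →
      (¬ ∃ b ∈ B, (SimpleGraph.fromEdgeSet (S : Set (Sym2 V))).Reachable a b) →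
      (∃ b ∈ B, (SimpleGraph.fromEdgeSet (S : Set (Sym2 V))).Reachable c b) →
      ∃ x y : V, Γ.Adj x y ∧
        (¬ ∃ b ∈ B, (SimpleGraph.fromEdgeSet (S : Set (Sym2 V))).Reachable x b) ∧
        (∃ b ∈ B, (SimpleGraph.fromEdgeSet (S : Set (Sym2 V))).Reachable y b) := by
  intro a c w
  induction w with
  | nil => intro h1 h2; exact absurd h2 h1
  | @cons a d c hadj q ih =>
    intro h1 h2
    by_cases hd : ∃ b ∈ B, (SimpleGraph.fromEdgeSet (S : Set (Sym2 V))).Reachable d b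
    · exact ⟨a, d, hadj, h1, hd⟩
    · exact ih hd h2

lemma acyclic_insert {S : Finset (Sym2 V)} (hS : (S : Set (Sym2 V)) ⊆ Γ.edgeSet)
    (hac : (SimpleGraph.fromEdgeSet (S : Set (Sym2 V))).IsAcyclic) {x y : V}
    (hadj : Γ.Adj x y)
    (hreach : ¬ (SimpleGraph.fromEdgeSet (S : Set (Sym2 V))).Reachable x y) :
    (SimpleGraph.fromEdgeSet ((insert s(x, y) S : Finset (Sym2 V)) : Set (Sym2 V))).IsAcyclic := by
  intro a c hc
  by_cases he : s(x, y) ∈ c.edges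
  · have hGadj : (SimpleGraph.fromEdgeSet
        ((insert s(x, y) S : Finset (Sym2 V)) : Set (Sym2 V))).Adj x y := by
      rw [SimpleGraph.fromEdgeSet_adj]
      exact ⟨by simp, hadj.ne⟩
    have hcyc := SimpleGraph.adj_and_reachable_delete_edges_iff_exists_cycle.mpr ⟨a, c, hc, he⟩
    have hle : (SimpleGraph.fromEdgeSet ((insert s(x, y) S : Finset (Sym2 V)) : Set (Sym2 V)))
        \ SimpleGraph.fromEdgeSet {s(x, y)} ≤ SimpleGraph.fromEdgeSet (S : Set (Sym2 V)) := by
      intro p q hpq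
      rw [SimpleGraph.sdiff_adj] at hpq
      obtain ⟨h1, h2⟩ := hpq
      rw [SimpleGraph.fromEdgeSet_adj] at h1 ⊢
      refine ⟨?_, h1.2⟩
      have hne : s(p, q) ≠ s(x, y) := by
        intro hh
        exact h2 (by rw [SimpleGraph.fromEdgeSet_adj]; exact ⟨by simp [hh], h1.2⟩)
      have := h1.1
      rw [Finset.coe_insert, Set.mem_insert_iff] at this
      exact this.resolve_left hne
    exact hreach (hcyc.2.mono hle)
  · have hsub : ∀ f ∈ c.edges, f ∈ (SimpleGraph.fromEdgeSet (S : Set (Sym2 V))).edgeSet := by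
      intro f hf
      have h1 := c.edges_subset_edgeSet hf
      rw [SimpleGraph.edgeSet_fromEdgeSet] at h1 ⊢
      have hne : f ≠ s(x, y) := fun hh => he (hh ▸ hf)
      refine ⟨?_, h1.2⟩
      have := h1.1
      rw [Finset.coe_insert, Set.mem_insert_iff] at this
      exact this.resolve_left hne
    exact hac _ (hc.transfer hsub)

lemma extend_forest (hN : IsNetwork Γ B) :
    ∀ (n : ℕ) (S : Finset (Sym2 V)), (edgeFinset' Γ).card ≤ S.card + n →
      (S : Set (Sym2 V)) ⊆ Γ.edgeSet →
      (SimpleGraph.fromEdgeSet (S : Set (Sym2 V))).IsAcyclic →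
      ∃ T : Finset (Sym2 V), S ⊆ T ∧ (T : Set (Sym2 V)) ⊆ Γ.edgeSet ∧
        (SimpleGraph.fromEdgeSet (T : Set (Sym2 V))).IsAcyclic ∧
        ∀ z : V, ∃ b ∈ B, (SimpleGraph.fromEdgeSet (T : Set (Sym2 V))).Reachable z b := by
  intro n
  induction n with
  | zero =>
    intro S hcard hSE hac
    by_cases hdone : ∀ z : V, ∃ b ∈ B, (SimpleGraph.fromEdgeSet (S : Set (Sym2 V))).Reachable z b
    · exact ⟨S, le_refl S, hSE, hac, hdone⟩
    · exfalso
      push_neg at hdone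
      obtain ⟨z₀, hz₀⟩ := hdone
      have hz₀' : ¬ ∃ b ∈ B, (SimpleGraph.fromEdgeSet (S : Set (Sym2 V))).Reachable z₀ b := by
        push_neg; exact hz₀
      obtain ⟨b₀, hb₀⟩ := Finset.card_pos.mp (lt_of_lt_of_le (by norm_num) hN.two_le_card)
      obtain ⟨w⟩ := hN.connected z₀ b₀
      obtain ⟨x, y, hadj, hx, hy⟩ := find_boundary_edge w hz₀'
        ⟨b₀, hb₀, SimpleGraph.Reachable.refl _⟩
      have heS : s(x, y) ∉ S := by
        intro hin
        refine hx ?_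
        obtain ⟨b, hb, hr⟩ := hy
        refine ⟨b, hb, SimpleGraph.Reachable.trans ?_ hr⟩
        exact SimpleGraph.Adj.reachable
          (by rw [SimpleGraph.fromEdgeSet_adj]; exact ⟨hin, hadj.ne⟩)
      have hsub : insert s(x, y) S ⊆ edgeFinset' Γ := by
        intro f hf
        rcases Finset.mem_insert.mp hf with rfl | hf
        · rw [edgeFinset', Finset.mem_filter]; exact ⟨Finset.mem_univ _, hadj⟩
        · rw [edgeFinset', Finset.mem_filter]; exact ⟨Finset.mem_univ _, hSE hf⟩
      have := Finset.card_le_card hsub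
      rw [Finset.card_insert_of_notMem heS] at this
      omega
  | succ n ih =>
    intro S hcard hSE hac
    by_cases hdone : ∀ z : V, ∃ b ∈ B, (SimpleGraph.fromEdgeSet (S : Set (Sym2 V))).Reachable z b
    · exact ⟨S, le_refl S, hSE, hac, hdone⟩
    · push_neg at hdone
      obtain ⟨z₀, hz₀⟩ := hdone
      have hz₀' : ¬ ∃ b ∈ B, (SimpleGraph.fromEdgeSet (S : Set (Sym2 V))).Reachable z₀ b := by
        push_neg; exact hz₀
      obtain ⟨b₀, hb₀⟩ := Finset.card_pos.mp (lt_of_lt_of_le (by norm_num) hN.two_le_card)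
      obtain ⟨w⟩ := hN.connected z₀ b₀
      obtain ⟨x, y, hadj, hx, hy⟩ := find_boundary_edge w hz₀'
        ⟨b₀, hb₀, SimpleGraph.Reachable.refl _⟩
      have heS : s(x, y) ∉ S := by
        intro hin
        refine hx ?_
        obtain ⟨b, hb, hr⟩ := hy
        refine ⟨b, hb, SimpleGraph.Reachable.trans ?_ hr⟩
        exact SimpleGraph.Adj.reachable
          (by rw [SimpleGraph.fromEdgeSet_adj]; exact ⟨hin, hadj.ne⟩)
      have hxyreach : ¬ (SimpleGraph.fromEdgeSet (S : Set (Sym2 V))).Reachable x y := by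
        intro hr
        obtain ⟨b, hb, hr'⟩ := hy
        exact hx ⟨b, hb, hr.trans hr'⟩
      have hac' := acyclic_insert hSE hac hadj hxyreach
      have hSE' : ((insert s(x, y) S : Finset (Sym2 V)) : Set (Sym2 V)) ⊆ Γ.edgeSet := by
        rw [Finset.coe_insert]
        exact Set.insert_subset (Γ.mem_edgeSet.mpr hadj) hSE
      have hcard' : (edgeFinset' Γ).card ≤ (insert s(x, y) S).card + n := by
        rw [Finset.card_insert_of_notMem heS]
        omega
      obtain ⟨T, hST, hh⟩ := ih (insert s(x, y) S) hcard' hSE' hac'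
      exact ⟨T, (Finset.subset_insert _ _).trans hST, hh⟩

lemma crossing_exists_edge_not_in {C Xe : Finset (Sym2 V)} (hnot : ¬ C ⊆ Xe) :
    ∃ e ∈ C, e ∉ Xe := by
  obtain ⟨e, he, hne⟩ := Finset.not_subset.mp hnot
  exact ⟨e, he, hne⟩

lemma reach_of_walk {T : Finset (Sym2 V)} {e : Sym2 V}
    (hend : ∀ x ∈ e, ∃ b ∈ B,
      (SimpleGraph.fromEdgeSet ((T.erase e : Finset (Sym2 V)) : Set (Sym2 V))).Reachable x b) :
    ∀ {z' b₀ : V}, (SimpleGraph.fromEdgeSet (T : Set (Sym2 V))).Walk z' b₀ → b₀ ∈ B →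
      ∃ b ∈ B, (SimpleGraph.fromEdgeSet ((T.erase e : Finset (Sym2 V)) : Set (Sym2 V))).Reachable z' b := by
  intro z' b₀ w
  induction w with
  | nil => intro hb₀; exact ⟨_, hb₀, SimpleGraph.Reachable.refl _⟩
  | @cons z' d c' hadj q ihw =>
    intro hb₀
    obtain ⟨b₃, hb₃, hr⟩ := ihw hb₀
    rw [SimpleGraph.fromEdgeSet_adj] at hadj
    by_cases hce : s(z', d) = e
    · exact hend z' (hce ▸ Sym2.mem_mk_left z' d)
    · have hadj' : (SimpleGraph.fromEdgeSet
          ((T.erase e : Finset (Sym2 V)) : Set (Sym2 V))).Adj z' d := by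
        rw [SimpleGraph.fromEdgeSet_adj]
        refine ⟨?_, hadj.2⟩
        rw [Finset.coe_erase]
        exact ⟨hadj.1, hce⟩
      exact ⟨b₃, hb₃, hadj'.reachable.trans hr⟩

lemma cut_lemma (hN : IsNetwork Γ B) (Xe : Finset (Sym2 V)) (P : Finset (Sym2 V) → Prop)
    (hP : ∀ C, IsCrossing Γ B C → ¬ P C → ∃ e ∈ C, e ∉ Xe) :
    ∀ (n : ℕ) (T : Finset (Sym2 V)), T.card ≤ n → Xe ⊆ T →
      (T : Set (Sym2 V)) ⊆ Γ.edgeSet →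
      (SimpleGraph.fromEdgeSet (T : Set (Sym2 V))).IsAcyclic →
      (∀ z : V, ∃ b ∈ B, (SimpleGraph.fromEdgeSet (T : Set (Sym2 V))).Reachable z b) →
      ∃ F : Finset (Sym2 V), Xe ⊆ F ∧ (F : Set (Sym2 V)) ⊆ Γ.edgeSet ∧
        (SimpleGraph.fromEdgeSet (F : Set (Sym2 V))).IsAcyclic ∧
        (∀ z : V, ∃ b ∈ B, (SimpleGraph.fromEdgeSet (F : Set (Sym2 V))).Reachable z b) ∧
        (∀ C, IsCrossing Γ B C → C ⊆ F → P C) := by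
  intro n
  induction n with
  | zero =>
    intro T hcard hXeT hTE hac hreach
    by_cases hdone : ∀ C, IsCrossing Γ B C → C ⊆ T → P C
    · exact ⟨T, hXeT, hTE, hac, hreach, hdone⟩
    · exfalso
      push_neg at hdone
      obtain ⟨C, hC, hCT, hPC⟩ := hdone
      obtain ⟨e, heC, _⟩ := hP C hC hPC
      have : e ∈ T := hCT heC
      have hT0 : T = ∅ := Finset.card_eq_zero.mp (Nat.le_zero.mp hcard)
      rw [hT0] at this
      simp at this
  | succ n ih =>
    intro T hcard hXeT hTE hac hreach
    by_cases hdone : ∀ C, IsCrossing Γ B C → C ⊆ T → P C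
    · exact ⟨T, hXeT, hTE, hac, hreach, hdone⟩
    · push_neg at hdone
      obtain ⟨C, hC, hCT, hPC⟩ := hdone
      obtain ⟨e, heC, heXe⟩ := hP C hC hPC
      have heT : e ∈ T := hCT heC
      set T' := T.erase e with hT'
      obtain ⟨b₁, b₂, p, hp, hb₁, hb₂, hbne, hint, hCeq⟩ := hC
      have hep : e ∈ p.edges := by
        rw [hCeq] at heC
        exact List.mem_toFinset.mp heC
      -- both endpoints of `e` reach the boundary in `T'`
      have hend : ∀ x ∈ e, ∃ b ∈ B,
          (SimpleGraph.fromEdgeSet (T' : Set (Sym2 V))).Reachable x b := by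
        intro x hx
        have hxsupp : x ∈ p.support := by
          obtain ⟨t, rfl⟩ := Sym2.mem_iff_exists.mp hx
          exact p.fst_mem_support_of_mem_edges hep
        have hspec := p.take_spec hxsupp
        have hnodup : (p.edges).Nodup := hp.isTrail.edges_nodup
        have hedges : (p.takeUntil x hxsupp).edges ++ (p.dropUntil x hxsupp).edges
            = p.edges := by
          rw [← SimpleGraph.Walk.edges_append, hspec]
        have hwalk_reach : ∀ {y' : V} (r : Γ.Walk x y'), (∀ f ∈ r.edges, f ∈ T) →
            e ∉ r.edges →
            (SimpleGraph.fromEdgeSet (T' : Set (Sym2 V))).Reachable x y' := by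
          intro y' r hrT hre
          have hsub : ∀ f ∈ r.edges,
              f ∈ (SimpleGraph.fromEdgeSet (T' : Set (Sym2 V))).edgeSet := by
            intro f hf
            rw [SimpleGraph.edgeSet_fromEdgeSet]
            refine ⟨?_, Γ.not_isDiag_of_mem_edgeSet (r.edges_subset_edgeSet hf)⟩
            rw [hT', Finset.coe_erase]
            exact ⟨hrT f hf, fun hh => hre (hh ▸ hf)⟩
          exact (r.transfer _ hsub).reachable
        by_cases heq : e ∈ (p.takeUntil x hxsupp).edges
        · -- e not in the drop part
          have hdisj : e ∉ (p.dropUntil x hxsupp).edges := by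
            have := hedges ▸ hnodup
            intro hh
            exact (List.disjoint_of_nodup_append this) heq hh
          refine ⟨b₂, hb₂, hwalk_reach (p.dropUntil x hxsupp) ?_ hdisj⟩
          intro f hf
          refine hCT ?_
          rw [hCeq]
          exact List.mem_toFinset.mpr (hedges ▸ List.mem_append_right _ hf)
        · refine ⟨b₁, hb₁, ?_⟩
          have hrev : (SimpleGraph.fromEdgeSet (T' : Set (Sym2 V))).Reachable x b₁ := by
            have := hwalk_reach ((p.takeUntil x hxsupp).reverse) ?_ ?_
            · exact this
            · intro f hf
              rw [SimpleGraph.Walk.edges_reverse, List.mem_reverse] at hf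
              refine hCT ?_
              rw [hCeq]
              exact List.mem_toFinset.mpr (hedges ▸ List.mem_append_left _ hf)
            · rw [SimpleGraph.Walk.edges_reverse, List.mem_reverse]
              exact heq
          exact hrev
      -- every vertex reaches the boundary in `T'`
      have hreach' : ∀ z : V, ∃ b ∈ B,
          (SimpleGraph.fromEdgeSet (T' : Set (Sym2 V))).Reachable z b := by
        intro z
        obtain ⟨b₀, hb₀, hz⟩ := hreach z
        obtain ⟨w⟩ := hz
        exact reach_of_walk hend w hb₀
      have hcard' : T'.card ≤ n := by
        rw [hT']
        have := Finset.card_erase_of_mem heT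
        omega
      have hXeT' : Xe ⊆ T' := fun f hf =>
        Finset.mem_erase.mpr ⟨fun hh => heXe (hh ▸ hf), hXeT hf⟩
      have hT'E : (T' : Set (Sym2 V)) ⊆ Γ.edgeSet := by
        rw [hT', Finset.coe_erase]
        exact (Set.diff_subset).trans hTE
      have hac' : (SimpleGraph.fromEdgeSet (T' : Set (Sym2 V))).IsAcyclic := by
        refine acyclic_mono ?_ hac
        rw [hT', Finset.coe_erase]
        exact Set.diff_subset
      exact ih T' hcard' hXeT' hT'E hac' hreach'

lemma grove_of (hN : IsNetwork Γ B) {F : Finset (Sym2 V)}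
    (hFE : (F : Set (Sym2 V)) ⊆ Γ.edgeSet)
    (hac : (SimpleGraph.fromEdgeSet (F : Set (Sym2 V))).IsAcyclic)
    (hreach : ∀ z : V, ∃ b ∈ B, (SimpleGraph.fromEdgeSet (F : Set (Sym2 V))).Reachable z b) :
    IsGrove Γ B F := by
  refine ⟨hFE, hac, ?_, hreach⟩
  intro z hz
  obtain ⟨b, hb, hr⟩ := hreach z
  have hzb : z ≠ b := fun hh => hz (hh ▸ hb)
  obtain ⟨w⟩ := hr
  cases w with
  | nil => exact absurd rfl hzb
  | cons hadj q =>
    rw [SimpleGraph.fromEdgeSet_adj] at hadj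
    rename_i d
    exact ⟨s(z, d), hadj.1, Sym2.mem_mk_left z d⟩

lemma nobad_indep (hN : IsNetwork Γ B) {X : Finset (Option (Sym2 V))}
    (hX : X ⊆ ground Γ) (hnb : ¬ Bad Γ B X) :
    (∃ F, Sigma1 Γ B F ∧ X ⊆ F.image some) ∨
    (∃ F, Sigma0 Γ B F ∧ X ⊆ insert none (F.image some)) := by
  classical
  set Xe : Finset (Sym2 V) := Finset.univ.filter (fun e => some e ∈ X) with hXe
  have hXeX : ∀ e : Sym2 V, e ∈ Xe ↔ some e ∈ X := by
    intro e; rw [hXe]; simp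
  have hXeE : (Xe : Set (Sym2 V)) ⊆ Γ.edgeSet := by
    intro e he
    rw [Finset.mem_coe, hXeX] at he
    exact mem_ground_edge hX he
  have hac : (SimpleGraph.fromEdgeSet (Xe : Set (Sym2 V))).IsAcyclic := by
    refine acyclic_of_nocycle hXeE ?_
    intro a w hw
    by_contra hcon
    push_neg at hcon
    exact hnb (Or.inl ⟨a, w, hw, fun e he => (hXeX e).mp (hcon e he)⟩)
  obtain ⟨T, hXeT, hTE, hTac, hTreach⟩ :=
    extend_forest hN (edgeFinset' Γ).card Xe (by omega) hXeE hac
  by_cases hcross : ∃ C₀, IsCrossing Γ B C₀ ∧ C₀ ⊆ Xe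
  · obtain ⟨C₀, hC₀, hC₀Xe⟩ := hcross
    left
    have hP : ∀ C, IsCrossing Γ B C → ¬ (C = C₀) → ∃ e ∈ C, e ∉ Xe := by
      intro C hC hne
      by_contra hcon
      push_neg at hcon
      exact hnb (Or.inr (Or.inl ⟨C, C₀, hC, hC₀, hne,
        fun e he => (hXeX e).mp (hcon e he), fun e he => (hXeX e).mp (hC₀Xe he)⟩))
    obtain ⟨F, hXeF, hFE, hFac, hFreach, hFP⟩ :=
      cut_lemma hN Xe (fun C => C = C₀) hP T.card T le_rfl hXeT hTE hTac hTreach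
    have hnone : none ∉ X := fun hn =>
      hnb (Or.inr (Or.inr ⟨hn, C₀, hC₀, fun e he => (hXeX e).mp (hC₀Xe he)⟩))
    refine ⟨F, ⟨grove_of hN hFE hFac hFreach,
      ⟨C₀, ⟨hC₀, hC₀Xe.trans hXeF⟩, ?_⟩⟩, ?_⟩
    · rintro C ⟨hCc, hCF⟩
      exact hFP C hCc hCF
    · intro a ha
      cases a with
      | none => exact absurd ha hnone
      | some e => exact Finset.mem_image_of_mem some (hXeF ((hXeX e).mpr ha))
  · right
    push_neg at hcross
    have hP : ∀ C, IsCrossing Γ B C → ¬ False → ∃ e ∈ C, e ∉ Xe := by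
      intro C hC _
      by_contra hcon
      push_neg at hcon
      exact hcross C hC (fun e he => hcon e he)
    obtain ⟨F, hXeF, hFE, hFac, hFreach, hFP⟩ :=
      cut_lemma hN Xe (fun _ => False) hP T.card T le_rfl hXeT hTE hTac hTreach
    refine ⟨F, ⟨grove_of hN hFE hFac hFreach, fun C hC hCF => hFP C hC hCF⟩, ?_⟩
    intro a ha
    cases a with
    | none => exact Finset.mem_insert_self _ _
    | some e =>
      exact Finset.mem_insert_of_mem (Finset.mem_image_of_mem some (hXeF ((hXeX e).mpr ha)))

end Aux

/-- **Hyperplane (matrix) representation of the Dirichlet matroid**: with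
`u : B → ℝ` injective, `v_e = χ_i − χ_j` for interior edges `e = ij`,
`v_e = χ_i − u(j)·δ` for boundary edges `e = ij` (`j ∈ B`), and `v_ê = δ`, a set
`X ⊆ Ē` indexes a linearly independent family iff `X ⊆ F` for some `F ∈ Σ₁` or
`X ⊆ F ∪ {ê}` for some `F ∈ Σ₀`; equivalently, it is linearly dependent iff `X`
contains the edge set of a cycle of `Γ`, or two distinct crossings of `N`, or
`ê` together with a crossing of `N`. -/
theorem hyperplane_representation
    (Γ : SimpleGraph V) (B : Finset V) (hN : IsNetwork Γ B)
    (u : V → ℝ) (hu : Set.InjOn u (B : Set V))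
    (v : Option (Sym2 V) → ({w : V // w ∉ B} → ℝ) × ℝ)
    (hvhat : v none = (0, 1))
    (hvE : ∀ i j : V, Γ.Adj i j →
      (∀ (hi : i ∉ B) (hj : j ∉ B),
        v (some s(i, j)) = (Pi.single ⟨i, hi⟩ 1 - Pi.single ⟨j, hj⟩ 1, 0) ∨
        v (some s(i, j)) = (Pi.single ⟨j, hj⟩ 1 - Pi.single ⟨i, hi⟩ 1, 0)) ∧
      (∀ (hi : i ∉ B), j ∈ B → v (some s(i, j)) = (Pi.single ⟨i, hi⟩ 1, -u j)))
    (X : Finset (Option (Sym2 V))) (hX : X ⊆ ground Γ) :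
    (LinearIndependent ℝ (fun a : {a // a ∈ X} => v a.1) ↔
      ((∃ F, Sigma1 Γ B F ∧ X ⊆ F.image some) ∨
       (∃ F, Sigma0 Γ B F ∧ X ⊆ insert none (F.image some)))) ∧
    (¬ LinearIndependent ℝ (fun a : {a // a ∈ X} => v a.1) ↔
      ((∃ (a : V) (w : Γ.Walk a a), w.IsCycle ∧ ∀ e ∈ w.edges, some e ∈ X) ∨
       (∃ C₁ C₂ : Finset (Sym2 V), IsCrossing Γ B C₁ ∧ IsCrossing Γ B C₂ ∧ C₁ ≠ C₂ ∧
         (∀ e ∈ C₁, some e ∈ X) ∧ (∀ e ∈ C₂, some e ∈ X)) ∨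
       (none ∈ X ∧ ∃ C, IsCrossing Γ B C ∧ ∀ e ∈ C, some e ∈ X))) := by
  classical
  have hVE : VE Γ B u v := hvE
  have hL2 := nobad_indep hN hX
  have hL3 := nobad_linIndep hN hu hvhat hVE hX
  constructor
  · constructor
    · intro hli
      by_contra hcon
      have hbad : Bad Γ B X := by
        by_contra hnb
        exact hcon (hL2 hnb)
      exact bad_dep hN hu hvhat hVE hbad hli
    · intro h
      exact hL3 (indep_nobad h)
  · constructor
    · intro hnli
      by_contra hcon
      exact hnli (hL3 hcon)
    · intro hbad
      exact bad_dep hN hu hvhat hVE hbad
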